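/- Let P_1, …, P_h (h ≥ 3) be paths on the triangular grid admitting a system of non-representative edges u_1, …, u_h, and suppose three of these edges, say u_a, u_b, u_c, all lie on a common grid line, with u_b lying between u_a and u_c on that line. Then the path P_b (the member of the family not containing u_b) has at least three bends; in particular, a minimal non-(h−1)-Helly family of paths on the triangular grid containing three co-linear non-representative edges must contain a path with at least three bends. -/

import Mathlib

/-- The triangular grid: the simple graph on `ℤ × ℤ` where two points are adjacent
iff their difference is `±(1,0)`, `±(0,1)` or `±(1,1)`. -/
def TGrid : SimpleGraph (ℤ × ℤ) where
  Adj u v :=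
    (v.1 - u.1 = 1 ∧ v.2 - u.2 = 0) ∨ (v.1 - u.1 = -1 ∧ v.2 - u.2 = 0) ∨
    (v.1 - u.1 = 0 ∧ v.2 - u.2 = 1) ∨ (v.1 - u.1 = 0 ∧ v.2 - u.2 = -1) ∨
    (v.1 - u.1 = 1 ∧ v.2 - u.2 = 1) ∨ (v.1 - u.1 = -1 ∧ v.2 - u.2 = -1)
  symm := ⟨by intro u v h; omega⟩
  loopless := ⟨by intro u h; omega⟩

/-- The (symmetric) direction datum of a grid edge: the pair of absolute coordinate
differences.  For grid edges this is `(1,0)` (horizontal), `(0,1)` (vertical) or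
`(1,1)` (diagonal). -/
def edir (e : Sym2 (ℤ × ℤ)) : ℤ × ℤ :=
  Sym2.lift ⟨fun u v => (|u.1 - v.1|, |u.2 - v.2|), by
    intro u v; simp [abs_sub_comm]⟩ e

/-- The `t`-th edge of a walk. -/
def wEdge {u v : ℤ × ℤ} (p : TGrid.Walk u v) (t : ℕ) : Sym2 (ℤ × ℤ) :=
  s(p.getVert t, p.getVert (t + 1))

/-- The number of bends of a walk: the number of consecutive pairs of edges with
different directions. -/
def bendCount {u v : ℤ × ℤ} (p : TGrid.Walk u v) : ℕ :=
  (List.range (p.length - 1)).countP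
    (fun i => decide (edir (wEdge p i) ≠ edir (wEdge p (i + 1))))

/-- `b` is a bend point of the walk `p`. -/
def IsBendAt {u v : ℤ × ℤ} (p : TGrid.Walk u v) (b : ℤ × ℤ) : Prop :=
  ∃ i : ℕ, i + 2 ≤ p.length ∧ p.getVert (i + 1) = b ∧
    edir (wEdge p i) ≠ edir (wEdge p (i + 1))

/-- A (nontrivial simple) path on the triangular grid. -/
structure TPath where
  src : ℤ × ℤ
  dst : ℤ × ℤ
  walk : TGrid.Walk src dst
  isPath : walk.IsPath
  nontriv : 0 < walk.length

/-- The set of grid edges of a path. -/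
def pEdges (P : TPath) : Set (Sym2 (ℤ × ℤ)) := {e | e ∈ P.walk.edges}

/-- The set of grid points of a path. -/
def pPts (P : TPath) : Set (ℤ × ℤ) := {q | q ∈ P.walk.support}

/-- A segment of a path: a maximal straight (bend-free) subpath, recorded by the
interval of edge indices `[i, j)` it occupies. -/
structure Segment (P : TPath) where
  i : ℕ
  j : ℕ
  lt : i < j
  le : j ≤ P.walk.length
  straight : ∀ t, i ≤ t → t < j → edir (wEdge P.walk t) = edir (wEdge P.walk i)
  maxLeft : i = 0 ∨ edir (wEdge P.walk (i - 1)) ≠ edir (wEdge P.walk i)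
  maxRight : j = P.walk.length ∨ edir (wEdge P.walk (j - 1)) ≠ edir (wEdge P.walk j)

/-- The set of grid edges of a segment. -/
def Segment.edges {P : TPath} (s : Segment P) : Set (Sym2 (ℤ × ℤ)) :=
  {e | ∃ t, s.i ≤ t ∧ t < s.j ∧ e = wEdge P.walk t}

/-- The set of grid points of a segment. -/
def Segment.pts {P : TPath} (s : Segment P) : Set (ℤ × ℤ) :=
  {q | ∃ t, s.i ≤ t ∧ t ≤ s.j ∧ q = P.walk.getVert t}

/-- The direction of a segment. -/
def Segment.dir {P : TPath} (s : Segment P) : ℤ × ℤ := edir (wEdge P.walk s.i)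

/-- The three directions of the triangular grid. -/
inductive Dir | H | V | D
deriving DecidableEq

/-- The direction of the (straight) line from `a` to `b`. -/
def dirOf (a b : ℤ × ℤ) : Dir :=
  if a.2 = b.2 then .H else if a.1 = b.1 then .V else .D

/-- A grid line of the triangular grid: a full horizontal, vertical or diagonal line. -/
structure GridLine where
  dir : Dir
  c : ℤ

/-- The parametrization of the points of a grid line. -/
def GridLine.pt (l : GridLine) (t : ℤ) : ℤ × ℤ :=
  match l.dir with
  | .H => (t, l.c)
  | .V => (l.c, t)
  | .D => (l.c + t, t)

/-- The `t`-th edge of a grid line. -/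
def GridLine.edge (l : GridLine) (t : ℤ) : Sym2 (ℤ × ℤ) := s(l.pt t, l.pt (t + 1))

/-- The set of grid points of a grid line. -/
def GridLine.pts (l : GridLine) : Set (ℤ × ℤ) := Set.range l.pt

/-- The set of grid edges of a grid line. -/
def GridLine.edges (l : GridLine) : Set (Sym2 (ℤ × ℤ)) := Set.range l.edge

/-- A right triangle of the triangular grid, given by a base corner `p`, a leg
length `k ≥ 1`, and one of the two possible orientations. -/
structure RightTri where
  p : ℤ × ℤ
  k : ℤ
  hk : 1 ≤ k
  orientA : Bool

/-- The set of grid edges of a right triangle. -/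
def RightTri.edges (T : RightTri) : Set (Sym2 (ℤ × ℤ)) :=
  if T.orientA then
    {e | ∃ t : ℤ, 0 ≤ t ∧ t < T.k ∧
      (e = s((T.p.1 + t, T.p.2), (T.p.1 + t + 1, T.p.2)) ∨
       e = s((T.p.1 + T.k, T.p.2 + t), (T.p.1 + T.k, T.p.2 + t + 1)) ∨
       e = s((T.p.1 + t, T.p.2 + t), (T.p.1 + t + 1, T.p.2 + t + 1)))}
  else
    {e | ∃ t : ℤ, 0 ≤ t ∧ t < T.k ∧
      (e = s((T.p.1, T.p.2 + t), (T.p.1, T.p.2 + t + 1)) ∨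
       e = s((T.p.1 + t, T.p.2 + T.k), (T.p.1 + t + 1, T.p.2 + T.k)) ∨
       e = s((T.p.1 + t, T.p.2 + t), (T.p.1 + t + 1, T.p.2 + t + 1)))}

/-- The three corners of a right triangle. -/
def RightTri.corners (T : RightTri) : Set (ℤ × ℤ) :=
  if T.orientA then {T.p, (T.p.1 + T.k, T.p.2), (T.p.1 + T.k, T.p.2 + T.k)}
  else {T.p, (T.p.1, T.p.2 + T.k), (T.p.1 + T.k, T.p.2 + T.k)}

/-- `U(𝒫)`: the subgraph of the grid formed by all segments of members of the family
that share at least one grid edge with another member, given by its set of edges. -/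
def UEdges {ι : Type} (P : ι → TPath) : Set (Sym2 (ℤ × ℤ)) :=
  {e | ∃ i : ι, ∃ s : Segment (P i), e ∈ s.edges ∧
        ∃ j : ι, j ≠ i ∧ (s.edges ∩ pEdges (P j)).Nonempty}

/-- A B₁-EPGₜ representation of a simple graph `G`: a family of at most-one-bend
paths on the triangular grid whose edge-intersection graph is `G`. -/
def IsB1EPGtRep {V : Type} (G : SimpleGraph V) (Rep : V → TPath) : Prop :=
  (∀ v, bendCount (Rep v).walk ≤ 1) ∧
  ∀ u v : V, u ≠ v → (G.Adj u v ↔ (pEdges (Rep u) ∩ pEdges (Rep v)).Nonempty)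

/-! ### Auxiliary machinery for `stmt5` -/

open SimpleGraph

/-- The step vector of a walk at index `k`. -/
def wStep {x y : ℤ × ℤ} (w : TGrid.Walk x y) (k : ℕ) : ℤ × ℤ :=
  w.getVert (k + 1) - w.getVert k

/-- Integer scalar multiple on `ℤ × ℤ`. -/
def zsm (z : ℤ) (v : ℤ × ℤ) : ℤ × ℤ := (z * v.1, z * v.2)

/-- The six possible step vectors of the triangular grid. -/
def sixStep (d : ℤ × ℤ) : Prop :=
  d = (1, 0) ∨ d = (-1, 0) ∨ d = (0, 1) ∨ d = (0, -1) ∨ d = (1, 1) ∨ d = (-1, -1)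

/-- The unit vector of a direction. -/
def dvec : Dir → ℤ × ℤ
  | .H => (1, 0)
  | .V => (0, 1)
  | .D => (1, 1)

lemma edir_mk (a b : ℤ × ℤ) : edir s(a, b) = (|a.1 - b.1|, |a.2 - b.2|) := by
  simp [edir]

lemma edir_wEdge {x y : ℤ × ℤ} (w : TGrid.Walk x y) (k : ℕ) :
    edir (wEdge w k) = (|(wStep w k).1|, |(wStep w k).2|) := by
  simp [wEdge, edir_mk, wStep, abs_sub_comm]

lemma pt_succ (l : GridLine) (r : ℤ) : l.pt (r + 1) = l.pt r + dvec l.dir := by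
  obtain ⟨d, c⟩ := l
  cases d <;> simp [GridLine.pt, dvec, Prod.ext_iff] <;> ring

lemma pt_zsm (l : GridLine) (r z : ℤ) : l.pt r + zsm z (dvec l.dir) = l.pt (r + z) := by
  obtain ⟨d, c⟩ := l
  cases d <;> simp [GridLine.pt, dvec, zsm, Prod.ext_iff] <;> ring

lemma pt_inj (l : GridLine) : Function.Injective l.pt := by
  intro r s h
  obtain ⟨d, c⟩ := l
  cases d <;> simp [GridLine.pt, Prod.ext_iff] at h <;> omega

lemma edge_inj (l : GridLine) {r s : ℤ} (h : l.edge r = l.edge s) : r = s := by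
  rw [GridLine.edge, GridLine.edge, Sym2.eq_iff] at h
  rcases h with ⟨h1, h2⟩ | ⟨h1, h2⟩
  · exact pt_inj l h1
  · have := pt_inj l h1
    have := pt_inj l h2
    omega

lemma getVert_ne {x y : ℤ × ℤ} (w : TGrid.Walk x y) (hp : w.IsPath) :
    ∀ {i j : ℕ}, i < j → j ≤ w.length → w.getVert i ≠ w.getVert j := by
  induction w with
  | nil => intro i j hij hj; simp at hj; omega
  | cons h q ih =>
    intro i j hij hj
    rw [Walk.cons_isPath_iff] at hp
    rw [Walk.length_cons] at hj
    obtain ⟨j, rfl⟩ : ∃ j', j = j' + 1 := ⟨j - 1, by omega⟩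
    cases i with
    | zero =>
      intro hcon
      apply hp.2
      rw [Walk.mem_support_iff_exists_getVert]
      refine ⟨j, ?_, by omega⟩
      rw [Walk.getVert_cons_succ] at hcon
      exact hcon.symm
    | succ i =>
      rw [Walk.getVert_cons_succ, Walk.getVert_cons_succ]
      exact ih hp.1 (by omega) (by omega)

lemma wEdge_mem_edges {x y : ℤ × ℤ} (w : TGrid.Walk x y) :
    ∀ {k : ℕ}, k < w.length → wEdge w k ∈ w.edges := by
  induction w with
  | nil => intro k hk; simp at hk
  | @cons a b c h q ih =>
    intro k hk
    rw [Walk.edges_cons]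
    cases k with
    | zero =>
      refine List.mem_cons.mpr (Or.inl ?_)
      rw [wEdge, show (Walk.cons h q).getVert (0 + 1) = q.getVert 0 from
        Walk.getVert_cons_succ q h, Walk.getVert_zero, Walk.getVert_zero]
    | succ k =>
      right
      have : wEdge (Walk.cons h q) (k + 1) = wEdge q k := by
        simp [wEdge, Walk.getVert_cons_succ]
      rw [this]
      exact ih (by rw [Walk.length_cons] at hk; omega)

lemma mem_edges_exists {x y : ℤ × ℤ} (w : TGrid.Walk x y) :
    ∀ {e : Sym2 (ℤ × ℤ)}, e ∈ w.edges → ∃ k, k < w.length ∧ e = wEdge w k := by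
  induction w with
  | nil => intro e he; simp at he
  | @cons a b c h q ih =>
    intro e he
    rw [Walk.edges_cons, List.mem_cons] at he
    rcases he with rfl | he
    · refine ⟨0, by rw [Walk.length_cons]; omega, ?_⟩
      rw [wEdge, show (Walk.cons h q).getVert (0 + 1) = q.getVert 0 from
        Walk.getVert_cons_succ q h, Walk.getVert_zero, Walk.getVert_zero]
    · obtain ⟨k, hk, rfl⟩ := ih he
      refine ⟨k + 1, by rw [Walk.length_cons]; omega, ?_⟩
      simp [wEdge, Walk.getVert_cons_succ]

lemma step_six {x y : ℤ × ℤ} (w : TGrid.Walk x y) (k : ℕ) (hk : k < w.length) :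
    sixStep (wStep w k) := by
  have h : ((w.getVert (k+1)).1 - (w.getVert k).1 = 1 ∧ (w.getVert (k+1)).2 - (w.getVert k).2 = 0) ∨
      ((w.getVert (k+1)).1 - (w.getVert k).1 = -1 ∧ (w.getVert (k+1)).2 - (w.getVert k).2 = 0) ∨
      ((w.getVert (k+1)).1 - (w.getVert k).1 = 0 ∧ (w.getVert (k+1)).2 - (w.getVert k).2 = 1) ∨
      ((w.getVert (k+1)).1 - (w.getVert k).1 = 0 ∧ (w.getVert (k+1)).2 - (w.getVert k).2 = -1) ∨
      ((w.getVert (k+1)).1 - (w.getVert k).1 = 1 ∧ (w.getVert (k+1)).2 - (w.getVert k).2 = 1) ∨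
      ((w.getVert (k+1)).1 - (w.getVert k).1 = -1 ∧ (w.getVert (k+1)).2 - (w.getVert k).2 = -1) :=
    w.adj_getVert_succ hk
  simp only [sixStep, wStep, Prod.ext_iff, Prod.fst_sub, Prod.snd_sub]
  omega

lemma six_sign {d1 d2 : ℤ × ℤ} (h1 : sixStep d1) (h2 : sixStep d2)
    (he : (|d1.1|, |d1.2|) = (|d2.1|, |d2.2|)) : d2 = d1 ∨ d2 = -d1 := by
  rcases h1 with rfl | rfl | rfl | rfl | rfl | rfl <;>
    rcases h2 with rfl | rfl | rfl | rfl | rfl | rfl <;>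
    simp_all [Prod.ext_iff] <;> omega

lemma step_succ {x y : ℤ × ℤ} (w : TGrid.Walk x y) (hp : w.IsPath) (k : ℕ)
    (hk : k + 1 < w.length) (he : edir (wEdge w k) = edir (wEdge w (k + 1))) :
    wStep w (k + 1) = wStep w k := by
  have h1 := step_six w k (by omega)
  have h2 := step_six w (k + 1) hk
  rw [edir_wEdge, edir_wEdge] at he
  rcases six_sign h1 h2 he with h | h
  · exact h
  · exfalso
    have hv : w.getVert (k + 1 + 1) = w.getVert k := by
      have h' := h
      simp only [wStep, Prod.ext_iff, Prod.fst_sub, Prod.snd_sub, Prod.fst_neg,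
        Prod.snd_neg] at h' ⊢
      omega
    exact getVert_ne w hp (show k < k + 1 + 1 by omega) (by omega) hv.symm

lemma steps_const {x y : ℤ × ℤ} (w : TGrid.Walk x y) (hp : w.IsPath) (s j : ℕ)
    (hj : j < w.length)
    (hnb : ∀ k, s ≤ k → k < j → edir (wEdge w k) = edir (wEdge w (k + 1))) :
    ∀ k, s ≤ k → k ≤ j → wStep w k = wStep w s := by
  intro k hk1 hk2
  induction k, hk1 using Nat.le_induction with
  | base => rfl
  | succ k hk ih =>
    rw [step_succ w hp k (by omega) (hnb k hk (by omega))]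
    exact ih (by omega)

lemma affine {x y : ℤ × ℤ} (w : TGrid.Walk x y) (s t : ℕ)
    (hconst : ∀ k, s ≤ k → k ≤ t → wStep w k = wStep w s) :
    ∀ k, s ≤ k → k ≤ t + 1 →
      w.getVert k = w.getVert s + zsm ((k : ℤ) - (s : ℤ)) (wStep w s) := by
  intro k hk1 hk2
  induction k, hk1 using Nat.le_induction with
  | base => simp [zsm]
  | succ k hk ih =>
    have h1 : w.getVert (k + 1) = w.getVert k + wStep w k := by simp [wStep]
    rw [h1, ih (by omega), hconst k hk (by omega)]
    simp only [zsm, Prod.ext_iff, Prod.fst_add, Prod.snd_add]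
    push_cast
    constructor <;> ring

lemma zsm_neg (z : ℤ) (v : ℤ × ℤ) : zsm z (-v) = zsm (-z) v := by
  simp only [zsm, Prod.fst_neg, Prod.snd_neg, Prod.ext_iff]
  constructor <;> ring

lemma run_edges {x y : ℤ × ℤ} (w : TGrid.Walk x y) (l : GridLine) (s t m : ℕ)
    (hsm : s ≤ m) (hmt : m ≤ t) (ht : t < w.length) (ta : ℤ)
    (h1 : wEdge w m = l.edge ta)
    (hconst : ∀ k, s ≤ k → k ≤ t → wStep w k = wStep w s) :
    ∃ ε : ℤ, (ε = 1 ∨ ε = -1) ∧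
      (∀ k, s ≤ k → k ≤ t → wEdge w k = l.edge (ta + ε * ((k : ℤ) - (m : ℤ)))) ∧
      (∀ k, s ≤ k → k ≤ t + 1 → ∃ r, w.getVert k = l.pt r) := by
  have haff : ∀ k, s ≤ k → k ≤ t + 1 →
      w.getVert k = w.getVert m + zsm ((k : ℤ) - (m : ℤ)) (wStep w s) := by
    intro k hk1 hk2
    rw [affine w s t hconst k hk1 hk2, affine w s t hconst m hsm (by omega)]
    simp only [zsm, Prod.ext_iff, Prod.fst_add, Prod.snd_add]
    constructor <;> ring
  have hstep_m : wStep w m = wStep w s := hconst m hsm hmt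
  have hsym : (w.getVert m = l.pt ta ∧ w.getVert (m + 1) = l.pt (ta + 1)) ∨
      (w.getVert m = l.pt (ta + 1) ∧ w.getVert (m + 1) = l.pt ta) := by
    have h := h1
    rw [wEdge, GridLine.edge, Sym2.eq_iff] at h
    exact h
  rcases hsym with ⟨hA, hB⟩ | ⟨hA, hB⟩
  · have hv : wStep w s = dvec l.dir := by
      rw [← hstep_m]
      rw [wStep, hA, hB, pt_succ]
      exact add_sub_cancel_left _ _
    have hpt : ∀ k, s ≤ k → k ≤ t + 1 →
        w.getVert k = l.pt (ta + ((k : ℤ) - (m : ℤ))) := by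
      intro k hk1 hk2
      rw [haff k hk1 hk2, hA, hv, pt_zsm]
    refine ⟨1, Or.inl rfl, ?_, ?_⟩
    · intro k hk1 hk2
      rw [wEdge, hpt k hk1 (by omega), hpt (k + 1) (by omega) (by omega), GridLine.edge]
      have e1 : ta + (((k + 1 : ℕ) : ℤ) - (m : ℤ)) = ta + 1 * ((k : ℤ) - (m : ℤ)) + 1 := by
        push_cast; ring
      have e2 : ta + ((k : ℤ) - (m : ℤ)) = ta + 1 * ((k : ℤ) - (m : ℤ)) := by ring
      rw [e1, e2]
    · intro k hk1 hk2
      exact ⟨_, hpt k hk1 hk2⟩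
  · have hv : wStep w s = -dvec l.dir := by
      rw [← hstep_m]
      rw [wStep, hA, hB, pt_succ]
      have : l.pt ta - (l.pt ta + dvec l.dir) = -dvec l.dir := by
        simp [Prod.ext_iff]
      exact this
    have hpt : ∀ k, s ≤ k → k ≤ t + 1 →
        w.getVert k = l.pt (ta + 1 - ((k : ℤ) - (m : ℤ))) := by
      intro k hk1 hk2
      rw [haff k hk1 hk2, hA, hv, zsm_neg, pt_zsm]
      congr 1 <;> ring
    refine ⟨-1, Or.inr rfl, ?_, ?_⟩
    · intro k hk1 hk2
      rw [wEdge, hpt k hk1 (by omega), hpt (k + 1) (by omega) (by omega), GridLine.edge,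
        Sym2.eq_swap]
      have e1 : ta + 1 - (((k + 1 : ℕ) : ℤ) - (m : ℤ)) = ta + (-1) * ((k : ℤ) - (m : ℤ)) := by
        push_cast; ring
      have e2 : ta + 1 - ((k : ℤ) - (m : ℤ)) = ta + (-1) * ((k : ℤ) - (m : ℤ)) + 1 := by ring
      rw [e1, e2]
    · intro k hk1 hk2
      exact ⟨_, hpt k hk1 hk2⟩

lemma edir_edge (l : GridLine) (z : ℤ) : edir (l.edge z) = dvec l.dir := by
  rw [GridLine.edge, edir_mk, pt_succ]
  cases hd : l.dir <;> simp [dvec]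

lemma final_dir (l : GridLine) (p q m : ℤ) (hm : 1 ≤ m) (v : ℤ × ℤ) (hv : sixStep v)
    (h : l.pt q = l.pt p + zsm m v) : (|v.1|, |v.2|) = dvec l.dir := by
  obtain ⟨d, c⟩ := l
  rcases hv with rfl | rfl | rfl | rfl | rfl | rfl <;> cases d <;>
    simp_all [GridLine.pt, dvec, zsm, Prod.ext_iff] <;> omega

lemma three_le_countP (pr : ℕ → Bool) {n a b c : ℕ} (hab : a < b) (hbc : b < c) (hcn : c < n)
    (ha : pr a = true) (hb : pr b = true) (hc : pr c = true) :
    3 ≤ (List.range n).countP pr := by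
  classical
  have hnd : ((List.range n).filter pr).Nodup := List.nodup_range.filter _
  have hmem : ∀ x, x < n → pr x = true → x ∈ ((List.range n).filter pr).toFinset := by
    intro x h1 h2
    simp [List.mem_filter, List.mem_range, h1, h2]
  have hsub : ({a, b, c} : Finset ℕ) ⊆ ((List.range n).filter pr).toFinset := by
    intro x hx
    simp only [Finset.mem_insert, Finset.mem_singleton] at hx
    rcases hx with rfl | rfl | rfl
    · exact hmem _ (by omega) ha
    · exact hmem _ (by omega) hb
    · exact hmem _ hcn hc
  have hcard : ({a, b, c} : Finset ℕ).card = 3 := by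
    rw [Finset.card_insert_of_notMem (by simp; omega),
      Finset.card_insert_of_notMem (by simp; omega), Finset.card_singleton]
  calc 3 = ({a, b, c} : Finset ℕ).card := hcard.symm
    _ ≤ ((List.range n).filter pr).toFinset.card := Finset.card_le_card hsub
    _ = ((List.range n).filter pr).length := List.toFinset_card_of_nodup hnd
    _ = (List.range n).countP pr := List.countP_eq_length_filter.symm

lemma key {x y : ℤ × ℤ} (w : TGrid.Walk x y) (hp : w.IsPath) (l : GridLine)
    (s t : ℕ) (hst : s < t) (ht : t < w.length) (ta tb tc : ℤ)
    (h1 : wEdge w s = l.edge ta) (h2 : wEdge w t = l.edge tc)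
    (hb : (ta < tb ∧ tb < tc) ∨ (tc < tb ∧ tb < ta))
    (hm : l.edge tb ∉ w.edges) : 3 ≤ bendCount w := by
  classical
  -- Claim 1: there is a bend in [s, t)
  have hex1 : ∃ k, s ≤ k ∧ k < t ∧ edir (wEdge w k) ≠ edir (wEdge w (k + 1)) := by
    by_contra hno
    push_neg at hno
    have hconst := steps_const w hp s t ht hno
    obtain ⟨ε, hε, hedges, -⟩ := run_edges w l s t s le_rfl (by omega) ht ta h1 hconst
    have htc : ta + ε * ((t : ℤ) - (s : ℤ)) = tc :=
      edge_inj l ((hedges t (by omega) le_rfl).symm.trans h2)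
    rcases hε with rfl | rfl
    · rcases hb with ⟨hb1, hb2⟩ | ⟨hb1, hb2⟩
      · set k0 : ℕ := s + (tb - ta).toNat with hk0
        have hk0z : (k0 : ℤ) = (s : ℤ) + (tb - ta) := by simp [hk0]; omega
        have e : ta + 1 * ((k0 : ℤ) - (s : ℤ)) = tb := by omega
        have hmem := wEdge_mem_edges w (show k0 < w.length by omega)
        rw [hedges k0 (by omega) (by omega), e] at hmem
        exact hm hmem
      · omega
    · rcases hb with ⟨hb1, hb2⟩ | ⟨hb1, hb2⟩
      · omega
      · set k0 : ℕ := s + (ta - tb).toNat with hk0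
        have hk0z : (k0 : ℤ) = (s : ℤ) + (ta - tb) := by simp [hk0]; omega
        have e : ta + -1 * ((k0 : ℤ) - (s : ℤ)) = tb := by omega
        have hmem := wEdge_mem_edges w (show k0 < w.length by omega)
        rw [hedges k0 (by omega) (by omega), e] at hmem
        exact hm hmem
  let i1 := Nat.find hex1
  have hi1 : s ≤ i1 ∧ i1 < t ∧ edir (wEdge w i1) ≠ edir (wEdge w (i1 + 1)) :=
    Nat.find_spec hex1
  have hi1min : ∀ k, s ≤ k → k < i1 → edir (wEdge w k) = edir (wEdge w (k + 1)) := by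
    intro k hk1 hk2
    by_contra hne
    exact Nat.find_min hex1 hk2 ⟨hk1, by omega, hne⟩
  -- the run [s, i1] lies on the line
  have hconstA : ∀ k, s ≤ k → k ≤ i1 → wStep w k = wStep w s :=
    steps_const w hp s i1 (by omega) hi1min
  obtain ⟨εA, hεA, hedgesA, hptsA⟩ :=
    run_edges w l s i1 s le_rfl hi1.1 (by omega) ta h1 hconstA
  have hdirA : edir (wEdge w i1) = dvec l.dir := by
    rw [hedgesA i1 hi1.1 le_rfl, edir_edge]
  -- Claim 2: there is a bend in (i1, t)
  have hex2 : ∃ k, i1 < k ∧ k < t ∧ edir (wEdge w k) ≠ edir (wEdge w (k + 1)) := by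
    by_contra hno
    push_neg at hno
    have hconstC : ∀ k, i1 + 1 ≤ k → k ≤ t → wStep w k = wStep w (i1 + 1) :=
      steps_const w hp (i1 + 1) t ht (fun k hk1 hk2 => hno k (by omega) hk2)
    obtain ⟨εC, hεC, hedgesC, -⟩ :=
      run_edges w l (i1 + 1) t t (by omega) le_rfl ht tc h2 hconstC
    have hdirC : edir (wEdge w (i1 + 1)) = dvec l.dir := by
      rw [hedgesC (i1 + 1) le_rfl (by omega), edir_edge]
    exact hi1.2.2 (hdirA.trans hdirC.symm)
  let i2 := Nat.find hex2
  have hi2 : i1 < i2 ∧ i2 < t ∧ edir (wEdge w i2) ≠ edir (wEdge w (i2 + 1)) :=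
    Nat.find_spec hex2
  have hi2min : ∀ k, i1 < k → k < i2 → edir (wEdge w k) = edir (wEdge w (k + 1)) := by
    intro k hk1 hk2
    by_contra hne
    exact Nat.find_min hex2 hk2 ⟨hk1, by omega, hne⟩
  -- Claim 3: there is a bend in (i2, t)
  have hex3 : ∃ k, i2 < k ∧ k < t ∧ edir (wEdge w k) ≠ edir (wEdge w (k + 1)) := by
    by_contra hno
    push_neg at hno
    -- endpoint of run A is on the line
    obtain ⟨p, hpA⟩ := hptsA (i1 + 1) (by omega) (by omega)
    -- start of run C is on the line
    have hconstC : ∀ k, i2 + 1 ≤ k → k ≤ t → wStep w k = wStep w (i2 + 1) :=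
      steps_const w hp (i2 + 1) t ht (fun k hk1 hk2 => hno k (by omega) hk2)
    obtain ⟨εC, hεC, hedgesC, hptsC⟩ :=
      run_edges w l (i2 + 1) t t (by omega) le_rfl ht tc h2 hconstC
    obtain ⟨q, hpC⟩ := hptsC (i2 + 1) le_rfl (by omega)
    -- run B is straight
    have hconstB : ∀ k, i1 + 1 ≤ k → k ≤ i2 → wStep w k = wStep w (i1 + 1) :=
      steps_const w hp (i1 + 1) i2 (by omega) (fun k hk1 hk2 => hi2min k (by omega) hk2)
    have haffB := affine w (i1 + 1) i2 hconstB (i2 + 1) (by omega) (by omega)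
    have hsix : sixStep (wStep w (i1 + 1)) := step_six w (i1 + 1) (by omega)
    have hfd : (|(wStep w (i1 + 1)).1|, |(wStep w (i1 + 1)).2|) = dvec l.dir := by
      refine final_dir l p q (((i2 + 1 : ℕ) : ℤ) - ((i1 + 1 : ℕ) : ℤ)) (by push_cast; omega)
        _ hsix ?_
      rw [← hpA, ← hpC]
      exact haffB
    apply hi1.2.2
    rw [hdirA, edir_wEdge w (i1 + 1), hfd]
  obtain ⟨i3, h3a, h3b, h3c⟩ := hex3
  have hcnt := three_le_countP
    (fun i => decide (edir (wEdge w i) ≠ edir (wEdge w (i + 1))))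
    (show i1 < i2 from hi2.1) (show i2 < i3 from h3a)
    (show i3 < w.length - 1 by omega)
    (decide_eq_true hi1.2.2) (decide_eq_true hi2.2.2) (decide_eq_true h3c)
  exact hcnt

/-- If a family of paths on the triangular grid admits a system of
non-representative edges, three of which lie on a common grid line with one between
the other two, then the path missing the middle edge has at least three bends. -/
theorem stmt5 (h : ℕ) (hh : 3 ≤ h)
    (P : Fin h → TPath) (u : Fin h → Sym2 (ℤ × ℤ))
    (hinj : Function.Injective u)
    (hmiss : ∀ i, u i ∉ pEdges (P i))
    (hhit : ∀ i j, i ≠ j → u i ∈ pEdges (P j))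
    (a b c : Fin h) (hab : a ≠ b) (hbc : b ≠ c) (hac : a ≠ c)
    (l : GridLine) (ta tb tc : ℤ)
    (hea : u a = l.edge ta) (heb : u b = l.edge tb) (hec : u c = l.edge tc)
    (hbetween : (ta < tb ∧ tb < tc) ∨ (tc < tb ∧ tb < ta)) :
    3 ≤ bendCount (P b).walk := by
  
  have hac' : u a ≠ u c := fun e => hac (hinj e)
  have hma : u a ∈ (P b).walk.edges := hhit a b hab
  have hmc : u c ∈ (P b).walk.edges := hhit c b (Ne.symm hbc)
  obtain ⟨si, hsi, hse⟩ := mem_edges_exists (P b).walk hma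
  obtain ⟨ti, hti, hte⟩ := mem_edges_exists (P b).walk hmc
  have hmb : l.edge tb ∉ (P b).walk.edges := by rw [← heb]; exact hmiss b
  have hne : si ≠ ti := by
    intro e
    apply hac'
    rw [hse, hte, e]
  rcases Nat.lt_or_ge si ti with hlt | hge
  · exact key (P b).walk (P b).isPath l si ti hlt hti ta tb tc
      (hse.symm.trans hea) (hte.symm.trans hec) hbetween hmb
  · exact key (P b).walk (P b).isPath l ti si (by omega) hsi tc tb ta
      (hte.symm.trans hec) (hse.symm.trans hea) (Or.symm hbetween) hmb
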